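/- In the 3-node Kripke model with root a below two incomparable nodes b and c, where b forces only p and c forces only q, every formula θ built from p, q, ⊤ using only ¬, ∧, → satisfies: if both b and c force θ, then a forces θ. Consequently p ∨ q (forced at b and c but not at a) is not equivalent in intuitionistic propositional logic to any formula in the ∨-free fragment. -/
import Mathlib


inductive Fm (α : Type) : Type where
  | top  : Fm α
  | atom : α → Fm α
  | neg  : Fm α → Fm α
  | and  : Fm α → Fm α → Fm α
  | or   : Fm α → Fm α → Fm α
  | imp  : Fm α → Fm α → Fm α

structure KripkeModel (α : Type) : Type 1 where
  K : Type
  le : K → K → Prop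
  refl : ∀ k, le k k
  trans : ∀ {a b c}, le a b → le b c → le a c
  antisymm : ∀ {a b}, le a b → le b a → a = b
  val : K → α → Prop
  persist : ∀ {k k' p}, le k k' → val k p → val k' p

def force {α : Type} (M : KripkeModel α) : M.K → Fm α → Prop
  | _, .top => True
  | k, .atom p => M.val k p
  | k, .neg φ => ∀ k', M.le k k' → ¬ force M k' φ
  | k, .and φ ψ => force M k φ ∧ force M k ψ
  | k, .or φ ψ => force M k φ ∨ force M k ψ
  | k, .imp φ ψ => ∀ k', M.le k k' → force M k' φ → force M k' ψ

/-- ∨-free formulas: built using only ¬, ∧, →, ⊤ and atoms. -/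
def NoOr {α : Type} : Fm α → Prop
  | .top => True
  | .atom _ => True
  | .neg φ => NoOr φ
  | .and φ ψ => NoOr φ ∧ NoOr ψ
  | .or _ _ => False
  | .imp φ ψ => NoOr φ ∧ NoOr ψ

/-- The 3-node Kripke model with root a = 0 below two incomparable nodes b = 1
and c = 2, where b forces only the atom p = 0 and c forces only q = 1. -/
def M19 : KripkeModel (Fin 2) where
  K := Fin 3
  le := fun x y => x = y ∨ (x = 0 ∧ y = 1) ∨ (x = 0 ∧ y = 2)
  refl := by decide
  trans := by decide
  antisymm := by decide
  val := fun k p => (k = 1 ∧ p = 0) ∨ (k = 2 ∧ p = 1)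
  persist := by decide

lemma force_mono {α : Type} (M : KripkeModel α) {k k' : M.K} (h : M.le k k') :
    ∀ θ : Fm α, force M k θ → force M k' θ := by
  intro θ
  induction θ generalizing k k' with
  | top => intro; trivial
  | atom p => exact fun hv => M.persist h hv
  | neg φ ih => exact fun hf k'' hle => hf k'' (M.trans h hle)
  | and φ ψ ihφ ihψ => exact fun ⟨h1, h2⟩ => ⟨ihφ h h1, ihψ h h2⟩
  | or φ ψ ihφ ihψ => exact fun hf => hf.imp (ihφ h) (ihψ h)
  | imp φ ψ ihφ ihψ => exact fun hf k'' hle => hf k'' (M.trans h hle)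

lemma main19 : ∀ θ : Fm (Fin 2), NoOr θ →
    force M19 (1 : Fin 3) θ → force M19 (2 : Fin 3) θ →
    force M19 (0 : Fin 3) θ := by
  intro θ
  induction θ with
  | top => intros; trivial
  | atom p =>
    intro _ h1 h2
    rcases h1 with ⟨_, rfl⟩ | ⟨h, _⟩
    · rcases h2 with ⟨h, _⟩ | ⟨_, h⟩ <;> simp_all
    · exact absurd h (by decide)
  | neg φ ih =>
    intro _ h1 h2 k' hle
    rcases hle with rfl | ⟨_, rfl⟩ | ⟨_, rfl⟩
    · intro hf
      exact h1 (1:Fin 3) (Or.inl rfl) (force_mono M19 (Or.inr (Or.inl ⟨rfl, rfl⟩) : M19.le (0:Fin 3) (1:Fin 3)) φ hf)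
    · exact h1 (1:Fin 3) (Or.inl rfl)
    · exact h2 (2:Fin 3) (Or.inl rfl)
  | and φ ψ ihφ ihψ =>
    rintro ⟨nφ, nψ⟩ ⟨a1, b1⟩ ⟨a2, b2⟩
    exact ⟨ihφ nφ a1 a2, ihψ nψ b1 b2⟩
  | or φ ψ _ _ => intro h; exact absurd h (by simp [NoOr])
  | imp φ ψ ihφ ihψ =>
    rintro ⟨nφ, nψ⟩ h1 h2 k' hle hf
    rcases hle with rfl | ⟨_, rfl⟩ | ⟨_, rfl⟩
    · exact ihψ nψ (h1 (1:Fin 3) (Or.inl rfl) (force_mono M19 (Or.inr (Or.inl ⟨rfl, rfl⟩) : M19.le (0:Fin 3) (1:Fin 3)) φ hf))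
        (h2 (2:Fin 3) (Or.inl rfl) (force_mono M19 (Or.inr (Or.inr ⟨rfl, rfl⟩) : M19.le (0:Fin 3) (2:Fin 3)) φ hf))
    · exact h1 (1:Fin 3) (Or.inl rfl) hf
    · exact h2 (2:Fin 3) (Or.inl rfl) hf

/-- In the model M19, every ∨-free formula θ forced at both b and c is forced at
the root a; b and c force p ∨ q but a does not; hence p ∨ q is not forced at
exactly the same nodes as any ∨-free formula in every Kripke model, i.e. ∨ is
not definable from ¬, ∧, →, ⊤ in intuitionistic propositional logic. -/
theorem or_not_definable_IPL :
    (∀ θ : Fm (Fin 2), NoOr θ →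
        force M19 (1 : Fin 3) θ → force M19 (2 : Fin 3) θ →
        force M19 (0 : Fin 3) θ) ∧
    (force M19 (1 : Fin 3) (Fm.or (Fm.atom 0) (Fm.atom 1)) ∧
     force M19 (2 : Fin 3) (Fm.or (Fm.atom 0) (Fm.atom 1)) ∧
     ¬ force M19 (0 : Fin 3) (Fm.or (Fm.atom 0) (Fm.atom 1))) ∧
    ¬ ∃ θ : Fm (Fin 2), NoOr θ ∧
        ∀ (M : KripkeModel (Fin 2)) (k : M.K),
          (force M k θ ↔ force M k (Fm.or (Fm.atom 0) (Fm.atom 1))) := by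
  have hb : force M19 (1 : Fin 3) (Fm.or (Fm.atom 0) (Fm.atom 1)) := Or.inl (Or.inl ⟨rfl, rfl⟩)
  have hc : force M19 (2 : Fin 3) (Fm.or (Fm.atom 0) (Fm.atom 1)) := Or.inr (Or.inr ⟨rfl, rfl⟩)
  have ha : ¬ force M19 (0 : Fin 3) (Fm.or (Fm.atom 0) (Fm.atom 1)) := by
    rintro ((⟨h,_⟩|⟨h,_⟩) | (⟨h,_⟩|⟨h,_⟩)) <;> exact absurd h (by decide)
  refine ⟨main19, ⟨hb, hc, ha⟩, ?_⟩
  rintro ⟨θ, nθ, h⟩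
  exact ha ((h M19 (0:Fin 3)).mp (main19 θ nθ ((h M19 (1:Fin 3)).mpr hb) ((h M19 (2:Fin 3)).mpr hc)))
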